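/- Let u be a distribution on an open U ⊂ K^n and let (x₀,ξ₀) ∈ U × (K^n ∖ {0}). Then u is Λ-smooth at (x₀,ξ₀) if and only if: for all sufficiently large r ∈ ℤ, for every x ∈ B_r(x₀) and every s > r, there is N ∈ ℤ such that F(1_{B_s(x)}u)(λξ) = 0 for all ξ ∈ B_r(ξ₀) and all λ ∈ Λ with ord λ < N. -/

import Mathlib

open MeasureTheory Filter Topology
open scoped BigOperators Classical

noncomputable section

/-- Axiomatization of a non-archimedean local field: a topological field equipped with a
surjective discrete valuation `ord : K → ℤ ∪ {∞}` whose closed balls are compact open and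
form a neighborhood basis at every point. -/
class NALocalField (K : Type) [Field K] [TopologicalSpace K] where
  ord : K → WithTop ℤ
  ord_eq_top_iff : ∀ x : K, ord x = ⊤ ↔ x = 0
  ord_mul : ∀ x y : K, ord (x * y) = ord x + ord y
  ord_add : ∀ x y : K, min (ord x) (ord y) ≤ ord (x + y)
  ord_surjective : ∀ m : ℤ, ∃ x : K, ord x = (m : WithTop ℤ)
  isOpen_ball : ∀ m : ℤ, IsOpen {x : K | (m : WithTop ℤ) ≤ ord x}
  isCompact_ball : ∀ m : ℤ, IsCompact {x : K | (m : WithTop ℤ) ≤ ord x}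
  nhds_basis : ∀ x : K, (nhds x).HasBasis (fun _ : ℤ => True)
      (fun m => {y : K | (m : WithTop ℤ) ≤ ord (y - x)})

variable {K : Type} [Field K] [TopologicalSpace K] [IsTopologicalRing K] [NALocalField K]

/-- The minimum of the valuations of the coordinates of a vector; `|v| = q^{-ordVec v}`. -/
def ordVec {ι : Type} [Fintype ι] (v : ι → K) : WithTop ℤ :=
  Finset.univ.inf fun i => NALocalField.ord (v i)

/-- The ball of valuative radius `r` around `x` in `K^ι`. -/
def pball {ι : Type} [Fintype ι] (x : ι → K) (r : ℤ) : Set (ι → K) :=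
  {y | (r : WithTop ℤ) ≤ ordVec (x - y)}

section SB
variable {α : Type} [TopologicalSpace α]

/-- Schwartz–Bruhat functions on a subset `X ⊆ α`: locally constant compactly supported
`ℂ`-valued functions on `X` (as functions on the subtype). -/
def IsSB (X : Set α) (f : X → ℂ) : Prop :=
  IsLocallyConstant f ∧ HasCompactSupport f

/-- A distribution on `X`: a functional which is `ℂ`-linear on Schwartz–Bruhat functions. -/
def IsDistribution (X : Set α) (u : (X → ℂ) → ℂ) : Prop :=
  (∀ (c : ℂ) (f : X → ℂ), IsSB X f → u (c • f) = c * u f) ∧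
  (∀ f g : X → ℂ, IsSB X f → IsSB X g → u (f + g) = u f + u g)

/-- Schwartz–Bruhat functions on an open subset `U ⊆ α`, realized as locally constant
compactly supported functions on `α` whose support is contained in `U`. -/
def IsSBOn (U : Set α) (f : α → ℂ) : Prop :=
  IsLocallyConstant f ∧ HasCompactSupport f ∧ tsupport f ⊆ U

/-- A distribution on an open set `U ⊆ α`, in the ambient-function realization. -/
def IsDistributionOn (U : Set α) (u : (α → ℂ) → ℂ) : Prop :=
  (∀ (c : ℂ) (f : α → ℂ), IsSBOn U f → u (c • f) = c * u f) ∧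
  (∀ f g : α → ℂ, IsSBOn U f → IsSBOn U g → u (f + g) = u f + u g)

end SB

/-- `ψ` is an additive character of `K` which is trivial on the maximal ideal and
nontrivial on the ring of integers. -/
def IsStandardChar (ψ : AddChar K ℂ) : Prop :=
  (∀ x : K, (1 : WithTop ℤ) ≤ NALocalField.ord x → ψ x = 1) ∧
  (∃ x : K, (0 : WithTop ℤ) ≤ NALocalField.ord x ∧ ψ x ≠ 1)

/-- `Λ` is an open subgroup of finite index of `(K^×, ×)`. -/
structure IsOpenFinIndexSubgroup (Λ : Set K) : Prop where
  one_mem : (1 : K) ∈ Λ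
  mul_mem : ∀ a ∈ Λ, ∀ b ∈ Λ, a * b ∈ Λ
  inv_mem : ∀ a ∈ Λ, a⁻¹ ∈ Λ
  ne_zero : ∀ a ∈ Λ, a ≠ 0
  isOpen : IsOpen Λ
  finiteIndex : ∃ T : Finset K, ∀ x : K, x ≠ 0 → ∃ t ∈ T, t * x ∈ Λ

section Fourier
variable (ψ : AddChar K ℂ)

/-- `F(φu)(ξ) = u(x ↦ φ(x) ψ(x·ξ))` for a functional `u`. -/
def FTrans {ι : Type} [Fintype ι] (u : ((ι → K) → ℂ) → ℂ) (φ : (ι → K) → ℂ)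
    (ξ : ι → K) : ℂ :=
  u fun x => φ x * ψ (∑ i, x i * ξ i)

/-- `Λ`-microlocal smoothness of a distribution on an open subset `U ⊆ K^ι` at a point
`(x₀, ξ₀)`: there are neighborhoods `U₀ ∋ x₀` and `V₀ ∋ ξ₀` such that for every
Schwartz–Bruhat `φ` supported in `U₀` there is `N ∈ ℤ` with `F(φu)(λξ) = 0` for all
`ξ ∈ V₀` and all `λ ∈ Λ` with `ord λ < N`. -/
def LamSmoothAt (Λ : Set K) {ι : Type} [Fintype ι] (U : Set (ι → K))
    (u : ((ι → K) → ℂ) → ℂ) (x₀ ξ₀ : ι → K) : Prop :=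
  ∃ U₀ V₀ : Set (ι → K), IsOpen U₀ ∧ IsOpen V₀ ∧ x₀ ∈ U₀ ∧ ξ₀ ∈ V₀ ∧
    ∀ φ : (ι → K) → ℂ, IsSBOn U φ → tsupport φ ⊆ U₀ →
      ∃ N : ℤ, ∀ lam ∈ Λ, NALocalField.ord lam < (N : WithTop ℤ) →
        ∀ ξ ∈ V₀, FTrans ψ u φ (fun i => lam * ξ i) = 0

/-- The `Λ`-wave front set of a distribution on an open subset `U ⊆ K^ι`: the complement
in `U × (K^ι ∖ {0})` of the set of `Λ`-smooth points. -/
def WFset (Λ : Set K) {ι : Type} [Fintype ι] (U : Set (ι → K))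
    (u : ((ι → K) → ℂ) → ℂ) : Set ((ι → K) × (ι → K)) :=
  {p | p.1 ∈ U ∧ p.2 ≠ 0 ∧ ¬ LamSmoothAt ψ Λ U u p.1 p.2}

end Fourier


section Aux

open NALocalField

variable {K : Type} [Field K] [TopologicalSpace K] [IsTopologicalRing K] [NALocalField K]

lemma ord_one' : ord (1 : K) = 0 := by
  have h1 : ord (1 : K) ≠ ⊤ := fun h => one_ne_zero ((ord_eq_top_iff _).mp h)
  have h2 : ord ((1 : K) * 1) = ord (1 : K) + ord (1 : K) := ord_mul 1 1
  rw [one_mul] at h2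
  lift ord (1 : K) to ℤ using h1 with m hm
  have : m = m + m := by exact_mod_cast h2
  have : m = 0 := by omega
  simp [this]

lemma ord_neg' (x : K) : ord (-x) = ord x := by
  have hm1 : ord (-1 : K) = 0 := by
    have h1 : ord (-1 : K) ≠ ⊤ := fun h => (neg_ne_zero.mpr one_ne_zero) ((ord_eq_top_iff _).mp h)
    have h2 : ord ((-1 : K) * (-1)) = ord (-1 : K) + ord (-1 : K) := ord_mul _ _
    rw [neg_mul_neg, one_mul, ord_one'] at h2
    lift ord (-1 : K) to ℤ using h1 with m hm
    have : (0 : ℤ) = m + m := by exact_mod_cast h2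
    have : m = 0 := by omega
    simp [this]
  calc ord (-x) = ord ((-1 : K) * x) := by rw [neg_one_mul]
    _ = ord (-1 : K) + ord x := ord_mul _ _
    _ = ord x := by rw [hm1, zero_add]

lemma ord_sub_comm' (x y : K) : ord (x - y) = ord (y - x) := by
  rw [← ord_neg' (x - y), neg_sub]

variable {ι : Type} [Fintype ι]

lemma ord_zero' : ord (0 : K) = ⊤ := (ord_eq_top_iff 0).mpr rfl

lemma mem_pball {x y : ι → K} {r : ℤ} :
    y ∈ pball x r ↔ ∀ i, (r : WithTop ℤ) ≤ ord (x i - y i) := by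
  simp [pball, ordVec, Finset.le_inf_iff]

lemma mem_pball_self (x : ι → K) (r : ℤ) : x ∈ pball x r := by
  simp [mem_pball, ord_zero', le_top]

lemma mem_pball_symm {x y : ι → K} {r : ℤ} : y ∈ pball x r ↔ x ∈ pball y r := by
  simp only [mem_pball]
  constructor <;> (intro h i; rw [ord_sub_comm']; exact h i)

lemma pball_eq_of_mem {x y : ι → K} {r : ℤ} (h : y ∈ pball x r) : pball y r = pball x r := by
  rw [mem_pball] at h
  ext z
  simp only [mem_pball]
  constructor
  · intro hz i
    have : x i - z i = (x i - y i) + (y i - z i) := by ring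
    rw [this]
    exact le_trans (le_min (h i) (hz i)) (ord_add _ _)
  · intro hz i
    have : y i - z i = (y i - x i) + (x i - z i) := by ring
    rw [this]
    refine le_trans (le_min ?_ (hz i)) (ord_add _ _)
    rw [ord_sub_comm']; exact h i

lemma pball_mono {x : ι → K} {r s : ℤ} (h : r ≤ s) : pball x s ⊆ pball x r := by
  intro y hy
  rw [mem_pball] at hy ⊢
  intro i
  exact le_trans (by exact_mod_cast h) (hy i)

lemma pball_eq_pi (x : ι → K) (r : ℤ) :
    pball x r = Set.univ.pi (fun i => {t : K | (r : WithTop ℤ) ≤ ord (x i - t)}) := by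
  ext y; simp [mem_pball, Set.mem_univ_pi]

lemma pball_mem_nhds (x : ι → K) (r : ℤ) : pball x r ∈ nhds x := by
  rw [pball_eq_pi]
  refine set_pi_mem_nhds Set.finite_univ (fun i _ => ?_)
  have h := (NALocalField.nhds_basis (x i)).mem_of_mem (i := r) trivial
  have : {y : K | (r : WithTop ℤ) ≤ ord (y - x i)} = {t : K | (r : WithTop ℤ) ≤ ord (x i - t)} := by
    ext t; simp [ord_sub_comm']
  rwa [this] at h

lemma isOpen_pball (x : ι → K) (r : ℤ) : IsOpen (pball x r) := by
  rw [isOpen_iff_mem_nhds]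
  intro y hy
  rw [← pball_eq_of_mem hy]
  exact pball_mem_nhds y r

lemma isClosed_pball (x : ι → K) (r : ℤ) : IsClosed (pball x r) := by
  rw [← isOpen_compl_iff, isOpen_iff_mem_nhds]
  intro y hy
  refine Filter.mem_of_superset (pball_mem_nhds y r) ?_
  intro z hz hzx
  apply hy
  rw [mem_pball] at hz hzx ⊢
  intro i
  have : x i - y i = (x i - z i) + (z i - y i) := by ring
  rw [this]
  refine le_trans (le_min (hzx i) ?_) (ord_add _ _)
  rw [ord_sub_comm']; exact hz i

lemma isCompact_pball (x : ι → K) (r : ℤ) : IsCompact (pball x r) := by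
  have : pball x r = (fun v : ι → K => x - v) ''
      (Set.univ.pi fun _ : ι => {t : K | (r : WithTop ℤ) ≤ ord t}) := by
    ext y
    constructor
    · intro hy
      refine ⟨x - y, ?_, by simp⟩
      rw [mem_pball] at hy
      intro i _
      exact hy i
    · rintro ⟨v, hv, rfl⟩
      rw [mem_pball]
      intro i
      simpa using hv i (Set.mem_univ i)
  rw [this]
  exact (isCompact_univ_pi fun _ => NALocalField.isCompact_ball r).image
    (continuous_const.sub continuous_id)

lemma exists_pball_subset {x : ι → K} {W : Set (ι → K)} (h : W ∈ nhds x) :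
    ∃ r : ℤ, pball x r ⊆ W := by
  rw [nhds_pi, Filter.mem_pi] at h
  obtain ⟨I, hIfin, V, hV, hsub⟩ := h
  have hm : ∀ i : ι, ∃ m : ℤ, {y : K | (m : WithTop ℤ) ≤ ord (y - x i)} ⊆ V i := by
    intro i
    exact (NALocalField.nhds_basis (x i)).mem_iff.mp (hV i) |>.imp fun m hm => hm.2
  choose m hmV using hm
  obtain ⟨r, hr⟩ := Finset.exists_le (Finset.univ.image m)
  refine ⟨r, fun y hy => hsub ?_⟩
  intro i _
  apply hmV i
  rw [mem_pball] at hy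
  have hmi : m i ≤ r := hr _ (Finset.mem_image_of_mem m (Finset.mem_univ i))
  have := le_trans (show ((m i : ℤ) : WithTop ℤ) ≤ (r : WithTop ℤ) by exact_mod_cast hmi) (hy i)
  rw [ord_sub_comm'] at this
  exact this

lemma le_ord_sum {m : WithTop ℤ} {s : Finset ι} {f : ι → K}
    (h : ∀ i ∈ s, m ≤ ord (f i)) : m ≤ ord (∑ i ∈ s, f i) := by
  classical
  induction s using Finset.induction_on with
  | empty => simp [ord_zero', le_top]
  | @insert a t hnotmem ih =>
    rw [Finset.sum_insert hnotmem]
    refine le_trans (le_min (h a (Finset.mem_insert_self a t)) ?_) (ord_add _ _)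
    exact ih fun i hi => h i (Finset.mem_insert_of_mem hi)

lemma isLocallyConstant_char {ψ : AddChar K ℂ} (hψ : IsStandardChar ψ) (ξ : ι → K) :
    IsLocallyConstant (fun x : ι → K => ψ (∑ i, x i * ξ i)) := by
  rw [IsLocallyConstant.iff_exists_open]
  intro x
  have hM : ∀ i : ι, ∃ M : ℤ, ∀ h : K, (M : WithTop ℤ) ≤ ord h →
      (1 : WithTop ℤ) ≤ ord (h * ξ i) := by
    intro i
    by_cases hzi : ξ i = 0
    · exact ⟨0, fun h _ => by simp [hzi, ord_zero', le_top]⟩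
    · have : ord (ξ i) ≠ ⊤ := fun ht => hzi ((ord_eq_top_iff _).mp ht)
      lift ord (ξ i) to ℤ using this with mi hmi
      refine ⟨1 - mi, fun h hh => ?_⟩
      rw [ord_mul, ← hmi]
      calc (1 : WithTop ℤ) = ((1 - mi : ℤ) : WithTop ℤ) + (mi : WithTop ℤ) := by
            rw [← WithTop.coe_add]; norm_num
        _ ≤ ord h + (mi : WithTop ℤ) := add_le_add_left hh _
  choose M hMp using hM
  obtain ⟨r, hr⟩ := Finset.exists_le (Finset.univ.image M)
  refine ⟨pball x r, isOpen_pball x r, mem_pball_self x r, fun y hy => ?_⟩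
  have key : ψ (∑ i, (y i - x i) * ξ i) = 1 := by
    apply hψ.1
    apply le_ord_sum
    intro i _
    apply hMp i
    rw [mem_pball] at hy
    have hMi : M i ≤ r := hr _ (Finset.mem_image_of_mem M (Finset.mem_univ i))
    refine le_trans (show ((M i : ℤ) : WithTop ℤ) ≤ (r : WithTop ℤ) by exact_mod_cast hMi) ?_
    rw [ord_sub_comm']
    exact hy i
  have : (∑ i, y i * ξ i) = (∑ i, x i * ξ i) + ∑ i, (y i - x i) * ξ i := by
    rw [← Finset.sum_add_distrib]
    congr 1; ext i; ring
  rw [this, AddChar.map_add_eq_mul, key, mul_one]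

lemma isLocallyConstant_indicator {A : Set (ι → K)} (hA : IsOpen A) (hA' : IsClosed A) :
    IsLocallyConstant (fun y => if y ∈ A then (1 : ℂ) else 0) := by
  intro s
  have : (fun y => if y ∈ A then (1 : ℂ) else 0) ⁻¹' s =
      (if (1 : ℂ) ∈ s then A else ∅) ∪ (if (0 : ℂ) ∈ s then Aᶜ else ∅) := by
    ext y
    by_cases hy : y ∈ A <;> by_cases h1 : (1 : ℂ) ∈ s <;> by_cases h0 : (0 : ℂ) ∈ s <;>
      simp [hy, h1, h0]
  rw [this]
  refine IsOpen.union ?_ ?_ <;> split_ifs <;>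
    first | exact hA | exact isOpen_empty | exact hA'.isOpen_compl

lemma isSBOn_ball_char {U : Set (ι → K)} {ψ : AddChar K ℂ} (hψ : IsStandardChar ψ)
    (x : ι → K) (s : ℤ) (hsub : pball x s ⊆ U) (ξ : ι → K) :
    IsSBOn U (fun y => (if y ∈ pball x s then (1 : ℂ) else 0) * ψ (∑ i, y i * ξ i)) := by
  have hlc : IsLocallyConstant
      (fun y => (if y ∈ pball x s then (1 : ℂ) else 0) * ψ (∑ i, y i * ξ i)) :=
    (isLocallyConstant_indicator (isOpen_pball x s) (isClosed_pball x s)).mul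
      (isLocallyConstant_char hψ ξ)
  have hts : tsupport (fun y => (if y ∈ pball x s then (1 : ℂ) else 0) * ψ (∑ i, y i * ξ i))
      ⊆ pball x s := by
    apply closure_minimal _ (isClosed_pball x s)
    intro y hy
    by_contra hny
    simp [Function.mem_support, hny] at hy
  exact ⟨hlc, HasCompactSupport.of_support_subset_isCompact (isCompact_pball x s)
    (le_trans subset_closure hts), le_trans hts hsub⟩

lemma isSBOn_zero {α : Type} [TopologicalSpace α] (U : Set α) : IsSBOn U (0 : α → ℂ) := by
  refine ⟨IsLocallyConstant.const 0, ?_, ?_⟩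
  · rw [HasCompactSupport]
    have : tsupport (0 : α → ℂ) = ∅ := by simp [tsupport, Function.support]
    rw [this]; exact isCompact_empty
  · have : tsupport (0 : α → ℂ) = ∅ := by simp [tsupport, Function.support]
    rw [this]; exact Set.empty_subset U

lemma isSBOn_add {α : Type} [TopologicalSpace α] {U : Set α} {f g : α → ℂ}
    (hf : IsSBOn U f) (hg : IsSBOn U g) : IsSBOn U (f + g) := by
  refine ⟨(hf.1.prodMk hg.1).comp (fun p : ℂ × ℂ => p.1 + p.2), hf.2.1.add hg.2.1, ?_⟩
  refine le_trans (closure_minimal ?_ ((isClosed_tsupport f).union (isClosed_tsupport g)))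
    (Set.union_subset hf.2.2 hg.2.2)
  intro y hy
  by_contra hny
  simp only [Set.mem_union] at hny
  push_neg at hny
  have h1 : f y = 0 := by
    by_contra h; exact hny.1 (subset_closure h)
  have h2 : g y = 0 := by
    by_contra h; exact hny.2 (subset_closure h)
  simp [Function.mem_support, h1, h2] at hy

lemma u_zero {α : Type} [TopologicalSpace α] {U : Set α} {u : (α → ℂ) → ℂ}
    (hu : IsDistributionOn U u) : u 0 = 0 := by
  have := hu.1 0 0 (isSBOn_zero U)
  simpa using this

lemma isSBOn_sum {α β : Type} [TopologicalSpace α] {U : Set α} (G : Finset β) (f : β → α → ℂ)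
    (hf : ∀ t ∈ G, IsSBOn U (f t)) : IsSBOn U (∑ t ∈ G, f t) := by
  classical
  induction G using Finset.induction_on with
  | empty => simpa using isSBOn_zero U
  | @insert a t hnotmem ih =>
    rw [Finset.sum_insert hnotmem]
    exact isSBOn_add (hf a (Finset.mem_insert_self a t))
      (ih fun c hc => hf c (Finset.mem_insert_of_mem hc))

lemma u_sum {α β : Type} [TopologicalSpace α] {U : Set α} {u : (α → ℂ) → ℂ}
    (hu : IsDistributionOn U u) (G : Finset β) (f : β → α → ℂ)
    (hf : ∀ t ∈ G, IsSBOn U (f t)) :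
    u (∑ t ∈ G, f t) = ∑ t ∈ G, u (f t) := by
  classical
  induction G using Finset.induction_on with
  | empty => simp [u_zero hu]
  | @insert a t hnotmem ih =>
    rw [Finset.sum_insert hnotmem, Finset.sum_insert hnotmem,
      hu.2 _ _ (hf a (Finset.mem_insert_self a t))
        (isSBOn_sum t f fun c hc => hf c (Finset.mem_insert_of_mem hc)),
      ih fun c hc => hf c (Finset.mem_insert_of_mem hc)]

lemma exists_uniform_scale {φ : (ι → K) → ℂ} (hlc : IsLocallyConstant φ)
    (hcs : HasCompactSupport φ) (r : ℤ) :
    ∃ s : ℤ, r < s ∧ ∀ x y : ι → K, y ∈ pball x s → φ y = φ x := by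
  classical
  have hloc : ∀ x : ι → K, ∃ sx : ℤ, r < sx ∧ ∀ y ∈ pball x sx, φ y = φ x := by
    intro x
    obtain ⟨O, hO, hxO, hconst⟩ := (IsLocallyConstant.iff_exists_open φ).mp hlc x
    obtain ⟨s0, hs0⟩ := exists_pball_subset (hO.mem_nhds hxO)
    refine ⟨max s0 (r + 1), by omega, fun y hy => hconst y (hs0 (pball_mono (le_max_left _ _) hy))⟩
  choose sx hsx1 hsx2 using hloc
  have hcover : tsupport φ ⊆ ⋃ x : (ι → K), pball x (sx x) := by
    intro z _
    exact Set.mem_iUnion.mpr ⟨z, mem_pball_self z (sx z)⟩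
  obtain ⟨T, hT⟩ := hcs.elim_finite_subcover (fun x : (ι → K) => pball x (sx x))
    (fun x => isOpen_pball x (sx x)) hcover
  obtain ⟨s0, hs0⟩ := Finset.exists_le (T.image sx)
  refine ⟨max s0 (r + 1), by omega, fun x y hy => ?_⟩
  set s := max s0 (r + 1)
  by_cases hmeet : ∃ z ∈ pball x s, z ∈ tsupport φ
  · obtain ⟨z, hzx, hzsupp⟩ := hmeet
    obtain ⟨j, hjT, hzj⟩ := Set.mem_iUnion₂.mp (hT hzsupp)
    have hsj : sx j ≤ s :=
      le_trans (hs0 _ (Finset.mem_image_of_mem sx hjT)) (le_max_left _ _)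
    have hsub : pball x s ⊆ pball j (sx j) := by
      rw [← pball_eq_of_mem hzx, ← pball_eq_of_mem hzj]
      exact pball_mono hsj
    rw [hsx2 j y (hsub hy), hsx2 j x (hsub (mem_pball_self x s))]
  · push_neg at hmeet
    have hx0 : φ x = 0 := by
      by_contra h
      exact hmeet x (mem_pball_self x s) (subset_closure h)
    have hy0 : φ y = 0 := by
      by_contra h
      exact hmeet y hy (subset_closure h)
    rw [hx0, hy0]

lemma disjointify (s : ℤ) (F : Finset (ι → K)) :
    ∃ G : Finset (ι → K), G ⊆ F ∧ (⋃ x ∈ G, pball x s) = (⋃ x ∈ F, pball x s) ∧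
      ∀ x ∈ G, ∀ y ∈ G, x ≠ y → pball x s ∩ pball y s = ∅ := by
  classical
  induction F using Finset.induction_on with
  | empty => exact ⟨∅, le_refl _, rfl, by simp⟩
  | @insert a F hnotmem ih =>
    obtain ⟨G, hGF, hGU, hGd⟩ := ih
    by_cases h : ∃ g ∈ G, (pball a s ∩ pball g s).Nonempty
    · obtain ⟨g, hgG, z, hza, hzg⟩ := h
      have hball : pball a s = pball g s := by
        rw [← pball_eq_of_mem hza, ← pball_eq_of_mem hzg]
      refine ⟨G, le_trans hGF (Finset.subset_insert a F), ?_, hGd⟩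
      rw [Finset.set_biUnion_insert, hGU.symm, hball]
      rw [Set.union_eq_self_of_subset_left]
      intro w hw
      exact Set.mem_biUnion hgG hw
    · push_neg at h
      have haG : a ∉ G := fun ha => hnotmem (hGF ha)
      refine ⟨insert a G, Finset.insert_subset_insert a hGF, ?_, ?_⟩
      · rw [Finset.set_biUnion_insert, Finset.set_biUnion_insert, hGU]
      · intro x hx y hy hxy
        rcases Finset.mem_insert.mp hx with rfl | hxG <;>
          rcases Finset.mem_insert.mp hy with rfl | hyG
        · exact absurd rfl hxy
        · exact h y hyG
        · rw [Set.inter_comm]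
          exact h x hxG
        · exact hGd x hxG y hyG hxy

lemma tsupport_ind_subset (x : ι → K) (s : ℤ) :
    tsupport (fun y => if y ∈ pball x s then (1 : ℂ) else 0) ⊆ pball x s := by
  apply closure_minimal _ (isClosed_pball x s)
  intro y hy
  by_contra hny
  simp [Function.mem_support, hny] at hy

lemma isSBOn_ind {U : Set (ι → K)} {x : ι → K} {s : ℤ} (hsub : pball x s ⊆ U) :
    IsSBOn U (fun y => if y ∈ pball x s then (1 : ℂ) else 0) :=
  ⟨isLocallyConstant_indicator (isOpen_pball x s) (isClosed_pball x s),
    HasCompactSupport.of_support_subset_isCompact (isCompact_pball x s)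
      (le_trans subset_closure (tsupport_ind_subset x s)),
    le_trans (tsupport_ind_subset x s) hsub⟩

lemma isSBOn_smul {α : Type} [TopologicalSpace α] {U : Set α} (c : ℂ) {f : α → ℂ}
    (hf : IsSBOn U f) : IsSBOn U (c • f) := by
  have hlc : IsLocallyConstant (c • f) := by
    have : c • f = (fun _ => c) * f := by funext y; simp [Pi.smul_apply, smul_eq_mul]
    rw [this]
    exact (IsLocallyConstant.const c).mul hf.1
  have hts : tsupport (c • f) ⊆ tsupport f := by
    apply closure_mono
    intro y hy
    simp only [Function.mem_support, Pi.smul_apply, smul_eq_mul] at hy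
    exact Function.mem_support.mpr fun h => hy (by rw [h, mul_zero])
  exact ⟨hlc, IsCompact.of_isClosed_subset hf.2.1 (isClosed_tsupport _) hts,
    le_trans hts hf.2.2⟩

end Aux

/-- Let `u` be a distribution on an open `U ⊆ K^n` and
`(x₀, ξ₀) ∈ U × (K^n ∖ {0})`. Then `u` is `Λ`-smooth at `(x₀, ξ₀)` if and only if: for all
sufficiently large `r ∈ ℤ`, for every `x ∈ B_r(x₀)` and every `s > r`, there is `N ∈ ℤ`
such that `F(1_{B_s(x)} u)(λξ) = 0` for all `ξ ∈ B_r(ξ₀)` and all `λ ∈ Λ` with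
`ord λ < N`. -/
theorem lamSmoothAt_iff_ball_criterion {K : Type} [Field K] [TopologicalSpace K]
    [IsTopologicalRing K] [NALocalField K]
    (ψ : AddChar K ℂ) (hψ : IsStandardChar ψ)
    (Λ : Set K) (hΛ : IsOpenFinIndexSubgroup Λ)
    {n : ℕ} (U : Set (Fin n → K)) (hU : IsOpen U)
    (u : ((Fin n → K) → ℂ) → ℂ) (hu : IsDistributionOn U u)
    (x₀ ξ₀ : Fin n → K) (hx₀ : x₀ ∈ U) (hξ₀ : ξ₀ ≠ 0) :
    LamSmoothAt ψ Λ U u x₀ ξ₀ ↔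
      ∃ r₀ : ℤ, ∀ r : ℤ, r₀ ≤ r → ∀ x ∈ pball x₀ r, ∀ s : ℤ, r < s →
        ∃ N : ℤ, ∀ lam ∈ Λ, NALocalField.ord lam < (N : WithTop ℤ) →
          ∀ ξ ∈ pball ξ₀ r,
            FTrans ψ u (fun y => if y ∈ pball x s then (1 : ℂ) else 0)
              (fun i => lam * ξ i) = 0  := by
  classical
  constructor
  · rintro ⟨U₀, V₀, hU₀, hV₀, hxU₀, hξV₀, H⟩
    obtain ⟨r₁, hr₁⟩ := exists_pball_subset ((hU₀.inter hU).mem_nhds ⟨hxU₀, hx₀⟩)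
    obtain ⟨r₂, hr₂⟩ := exists_pball_subset (hV₀.mem_nhds hξV₀)
    refine ⟨max r₁ r₂, fun r hr x hx s hs => ?_⟩
    have hsubx : pball x s ⊆ pball x₀ r₁ := by
      refine le_trans (pball_mono (le_of_lt hs)) ?_
      rw [pball_eq_of_mem hx]
      exact pball_mono (le_trans (le_max_left _ _) hr)
    have hφ : IsSBOn U (fun y => if y ∈ pball x s then (1 : ℂ) else 0) :=
      isSBOn_ind (le_trans hsubx (le_trans hr₁ (Set.inter_subset_right)))
    obtain ⟨N, hN⟩ := H _ hφ
      (le_trans (tsupport_ind_subset x s)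
        (le_trans hsubx (le_trans hr₁ (Set.inter_subset_left))))
    refine ⟨N, fun lam hlam hord ξ hξ => ?_⟩
    exact hN lam hlam hord ξ
      (hr₂ (pball_mono (le_trans (le_max_right _ _) hr) hξ))
  · rintro ⟨r₀, H⟩
    obtain ⟨r₁, hr₁⟩ := exists_pball_subset (hU.mem_nhds hx₀)
    set r : ℤ := max r₀ r₁ with hrdef
    refine ⟨pball x₀ r, pball ξ₀ r, isOpen_pball _ _, isOpen_pball _ _,
      mem_pball_self _ _, mem_pball_self _ _, ?_⟩
    intro φ hφ hsupp
    obtain ⟨s, hrs, hconst⟩ := exists_uniform_scale hφ.1 hφ.2.1 r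
    -- finite cover of the support by radius-s balls centered in the support
    obtain ⟨T, hT⟩ := hφ.2.1.elim_finite_subcover
      (fun z : ↥(tsupport φ) => pball (z : Fin n → K) s)
      (fun z => isOpen_pball _ _)
      (fun z hz => Set.mem_iUnion.mpr ⟨⟨z, hz⟩, mem_pball_self z s⟩)
    set F : Finset (Fin n → K) := T.image Subtype.val with hFdef
    have hTF : tsupport φ ⊆ ⋃ x ∈ F, pball x s := by
      intro z hz
      obtain ⟨i, hiT, hzi⟩ := Set.mem_iUnion₂.mp (hT hz)
      exact Set.mem_biUnion (Finset.mem_image_of_mem Subtype.val hiT) hzi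
    obtain ⟨G, hGF, hGU, hGd⟩ := disjointify s F
    have hGcen : ∀ t ∈ G, t ∈ tsupport φ := by
      intro t ht
      obtain ⟨i, _, rfl⟩ := Finset.mem_image.mp (hGF ht)
      exact i.2
    have hGx₀ : ∀ t ∈ G, t ∈ pball x₀ r := fun t ht => hsupp (hGcen t ht)
    have hGsubU : ∀ t ∈ G, pball t s ⊆ U := by
      intro t ht
      refine le_trans (pball_mono (le_of_lt hrs)) ?_
      rw [pball_eq_of_mem (hGx₀ t ht)]
      exact le_trans (pball_mono (le_max_right _ _)) hr₁
    -- decomposition of φ into ball indicators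
    have hdecomp : φ = ∑ t ∈ G, (fun y => φ t * (if y ∈ pball t s then (1 : ℂ) else 0)) := by
      funext y
      rw [Finset.sum_apply]
      by_cases hy : ∃ t ∈ G, y ∈ pball t s
      · obtain ⟨t, htG, hyt⟩ := hy
        rw [Finset.sum_eq_single t]
        · simp only [hyt, if_pos, mul_one]
          exact hconst t y hyt
        · intro b hb hbt
          have hyb : y ∉ pball b s := by
            intro hyb
            have := hGd b hb t htG hbt
            exact absurd (Set.mem_inter hyb hyt) (by rw [this]; exact Set.notMem_empty y)
          simp [hyb]
        · intro h; exact absurd htG h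
      · push_neg at hy
        have hy0 : φ y = 0 := by
          by_contra h
          have h1 : y ∈ ⋃ x ∈ F, pball x s := hTF (subset_closure h)
          rw [← hGU] at h1
          obtain ⟨t, htG, hyt⟩ := Set.mem_iUnion₂.mp h1
          exact hy t htG hyt
        rw [hy0]
        symm
        apply Finset.sum_eq_zero
        intro t ht
        simp [hy t ht]
    -- choose N for each ball
    have hballs : ∀ t ∈ G, ∃ N : ℤ, ∀ lam ∈ Λ, NALocalField.ord lam < (N : WithTop ℤ) →
        ∀ ξ ∈ pball ξ₀ r,
          FTrans ψ u (fun y => if y ∈ pball t s then (1 : ℂ) else 0) (fun i => lam * ξ i) = 0 :=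
      fun t ht => H r (le_max_left _ _) t (hGx₀ t ht) s hrs
    choose! Nt hNt using hballs
    obtain ⟨M, hM⟩ := Finset.exists_le (G.image fun t => -(Nt t))
    refine ⟨-M, fun lam hlam hord ξ hξ => ?_⟩
    set ξ' : Fin n → K := fun i => lam * ξ i with hξ'def
    have hSB : ∀ t ∈ G, IsSBOn U
        (fun x => (if x ∈ pball t s then (1 : ℂ) else 0) * ψ (∑ i, x i * ξ' i)) :=
      fun t ht => isSBOn_ball_char hψ t s (hGsubU t ht) ξ'
    have hFT : FTrans ψ u φ ξ' =
        ∑ t ∈ G, φ t * FTrans ψ u (fun y => if y ∈ pball t s then (1 : ℂ) else 0) ξ' := by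
      have heq : (fun x => φ x * ψ (∑ i, x i * ξ' i)) =
          ∑ t ∈ G, (φ t • fun x =>
            (if x ∈ pball t s then (1 : ℂ) else 0) * ψ (∑ i, x i * ξ' i)) := by
        funext x
        rw [Finset.sum_apply]
        conv_lhs => rw [hdecomp]
        rw [Finset.sum_apply, Finset.sum_mul]
        apply Finset.sum_congr rfl
        intro t ht
        simp only [Pi.smul_apply, smul_eq_mul]
        ring
      show u (fun x => φ x * ψ (∑ i, x i * ξ' i)) = _
      rw [heq, u_sum hu G _ (fun t ht => isSBOn_smul (φ t) (hSB t ht))]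
      apply Finset.sum_congr rfl
      intro t ht
      exact hu.1 (φ t) _ (hSB t ht)
    rw [hFT]
    apply Finset.sum_eq_zero
    intro t ht
    have hNle : (-M : ℤ) ≤ Nt t := by
      have h2 : -(Nt t) ≤ M := hM _ (Finset.mem_image_of_mem (fun t => -(Nt t)) ht)
      omega
    rw [hNt t ht lam hlam
      (lt_of_lt_of_le hord (by exact_mod_cast hNle)) ξ hξ, mul_zero]
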